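/- (Padberg–Rao, Rizzi's proof) Let G=(V,E) be a finite graph with capacities c: E → ℚ≥0, T ⊆ V with |T| even and T ≠ ∅, and let a Gomory–Hu cut-tree with terminal set T be given (a tree on T together with a map π: V → T fixing T, such that each tree edge x∼y induces the cut U = π⁻¹(X_x) which is a minimum (x,y)-cut in G). Then some T-odd edge of the cut-tree induces a minimum T-cut: min over T-odd U ⊆ V of c(δ(U)) is attained by a cut induced by a T-odd tree edge. -/

import Mathlib

open scoped Classical

/-- The set of edges of `E` with exactly one endpoint in `U`. -/
noncomputable def cutEdges {V : Type*} [Fintype V] [DecidableEq V]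
    (E : Finset (V × V)) (U : Finset V) : Finset (V × V) :=
  E.filter (fun e => (e.1 ∈ U ∧ e.2 ∉ U) ∨ (e.1 ∉ U ∧ e.2 ∈ U))

/-- The vertex set of the component of `x` after deleting the edge `x∼y` from the graph `G`. -/
def sideSet {X : Type*} (G : SimpleGraph X) (x y : X) : Set X :=
  {z | (G.deleteEdges {s(x, y)}).Reachable x z}

namespace PadbergRaoAux

open Finset SimpleGraph

variable {S : Type*} [Fintype S]

lemma side_swap (τ : SimpleGraph S) (x y : S) :
    sideSet τ y x = {z | (τ.deleteEdges {s(x, y)}).Reachable y z} := by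
  have h : s(y, x) = s(x, y) := Sym2.eq_swap
  rw [sideSet]
  simp only [h]

lemma bridge (τ : SimpleGraph S) (hτ : τ.IsAcyclic) {x y : S} (h : τ.Adj x y) :
    ¬ (τ.deleteEdges {s(x, y)}).Reachable x y := by
  have hb : τ.IsBridge s(x, y) := isAcyclic_iff_forall_edge_isBridge.mp hτ h
  exact isBridge_iff.mp hb

lemma mem_side_self (τ : SimpleGraph S) (x y : S) : x ∈ sideSet τ x y :=
  Reachable.refl x

lemma not_mem_side (τ : SimpleGraph S) (hτ : τ.IsAcyclic) {x y : S} (h : τ.Adj x y) :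
    y ∉ sideSet τ x y := fun hy => bridge τ hτ h hy

lemma side_cover (τ : SimpleGraph S) (hτ : τ.IsTree) {x y : S} (h : τ.Adj x y) (z : S) :
    z ∈ sideSet τ x y ∨ z ∈ sideSet τ y x := by
  rw [side_swap τ x y]
  obtain ⟨w⟩ := hτ.isConnected.preconnected x z
  have main : ∀ (u v : S) (_ : τ.Walk u v),
      ((τ.deleteEdges {s(x, y)}).Reachable x u ∨ (τ.deleteEdges {s(x, y)}).Reachable y u) →
      ((τ.deleteEdges {s(x, y)}).Reachable x v ∨ (τ.deleteEdges {s(x, y)}).Reachable y v) := by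
    intro u v w
    induction w with
    | nil => exact id
    | @cons a b c hab q ih =>
      intro hu
      apply ih
      by_cases he : s(a, b) = s(x, y)
      · rw [Sym2.eq_iff] at he
        rcases he with ⟨rfl, rfl⟩ | ⟨rfl, rfl⟩
        · exact Or.inr (Reachable.refl _)
        · exact Or.inl (Reachable.refl _)
      · have hadj : (τ.deleteEdges {s(x, y)}).Adj a b := by
          rw [deleteEdges_adj]
          exact ⟨hab, by simpa using he⟩
        rcases hu with h1 | h1
        · exact Or.inl (h1.trans hadj.reachable)
        · exact Or.inr (h1.trans hadj.reachable)
  exact main x z w (Or.inl (Reachable.refl _))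

lemma side_disjoint (τ : SimpleGraph S) (hτ : τ.IsAcyclic) {x y : S} (h : τ.Adj x y) (z : S)
    (h1 : z ∈ sideSet τ x y) (h2 : z ∈ sideSet τ y x) : False := by
  rw [side_swap τ x y] at h2
  have r1 : (τ.deleteEdges {s(x, y)}).Reachable x z := h1
  have r2 : (τ.deleteEdges {s(x, y)}).Reachable y z := h2
  exact bridge τ hτ h (r1.trans r2.symm)

lemma exists_first_step (τ : SimpleGraph S) (hτ : τ.IsTree) {x z : S} (hz : z ≠ x) :
    ∃ y, τ.Adj x y ∧ z ∈ sideSet τ y x := by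
  obtain ⟨w⟩ := hτ.isConnected.preconnected x z
  obtain ⟨p, hpath⟩ := w.toPath
  cases p with
  | nil => exact absurd rfl hz
  | @cons _ b _ hxb q =>
    rw [SimpleGraph.Walk.cons_isPath_iff] at hpath
    obtain ⟨hq, hxnot⟩ := hpath
    refine ⟨b, hxb, ?_⟩
    have hedges : ∀ e ∈ q.edges, e ∉ ({s(b, x)} : Set (Sym2 S)) := by
      intro e he hee
      rw [Set.mem_singleton_iff] at hee
      subst hee
      exact hxnot (q.snd_mem_support_of_mem_edges he)
    exact ⟨q.toDeleteEdges _ hedges⟩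

lemma side_unique (τ : SimpleGraph S) (hτ : τ.IsTree) {x y y' z : S}
    (hy : τ.Adj x y) (hy' : τ.Adj x y')
    (h1 : z ∈ sideSet τ y x) (h2 : z ∈ sideSet τ y' x) : y = y' := by
  have build : ∀ {b : S}, τ.Adj x b → z ∈ sideSet τ b x →
      ∃ q : τ.Walk b z, q.IsPath ∧ x ∉ q.support := by
    intro b hb hzb
    have r : (τ.deleteEdges {s(b, x)}).Reachable b z := hzb
    obtain ⟨w⟩ := r
    have hx : x ∉ w.support := by
      intro hx
      exact bridge τ hτ.IsAcyclic hb.symm ⟨w.takeUntil x hx⟩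
    have hedges : ∀ e ∈ w.edges, e ∈ τ.edgeSet := fun e he =>
      (edgeSet_mono (deleteEdges_le _)) (w.edges_subset_edgeSet he)
    set w' : τ.Walk b z := w.transfer τ hedges with hw'
    have hsup : w'.support = w.support := SimpleGraph.Walk.support_transfer _ _
    refine ⟨w'.toPath, (w'.toPath).2, fun hc => ?_⟩
    exact hx (hsup ▸ (w'.support_toPath_subset hc))
  obtain ⟨q1, hq1, hx1⟩ := build hy h1
  obtain ⟨q2, hq2, hx2⟩ := build hy' h2
  have hkey := (isAcyclic_iff_path_unique.mp hτ.IsAcyclic)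
      ⟨SimpleGraph.Walk.cons hy q1, (SimpleGraph.Walk.cons_isPath_iff _ _).mpr ⟨hq1, hx1⟩⟩
      ⟨SimpleGraph.Walk.cons hy' q2, (SimpleGraph.Walk.cons_isPath_iff _ _).mpr ⟨hq2, hx2⟩⟩
  have hsup := congrArg (fun p : τ.Path x z => p.val.support) hkey
  simp only [SimpleGraph.Walk.support_cons] at hsup
  have h1' : q1.support = q2.support := by
    injection hsup
  rw [q1.support_eq_cons, q2.support_eq_cons] at h1'
  injection h1'

/-- Number of vertices on the `x`-side of the tree edge `x∼y`. -/
noncomputable def sc (τ : SimpleGraph S) (x y : S) : ℕ :=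
  (Finset.univ.filter (fun z => z ∈ sideSet τ x y)).card

lemma sc_add (τ : SimpleGraph S) (hτ : τ.IsTree) {x y : S} (h : τ.Adj x y) :
    sc τ x y + sc τ y x = Fintype.card S := by
  rw [sc, sc]
  have hdis : Disjoint (Finset.univ.filter (fun z => z ∈ sideSet τ x y))
      (Finset.univ.filter (fun z => z ∈ sideSet τ y x)) := by
    rw [Finset.disjoint_left]
    intro z hz1 hz2
    exact side_disjoint τ hτ.IsAcyclic h z (Finset.mem_filter.mp hz1).2
      (Finset.mem_filter.mp hz2).2
  rw [← Finset.card_union_of_disjoint hdis]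
  have huniv : (Finset.univ.filter (fun z => z ∈ sideSet τ x y)) ∪
      (Finset.univ.filter (fun z => z ∈ sideSet τ y x)) = Finset.univ := by
    ext z
    simp only [Finset.mem_union, Finset.mem_filter, Finset.mem_univ, true_and, iff_true]
    exact side_cover τ hτ h z
  rw [huniv, Finset.card_univ]

lemma sc_star (τ : SimpleGraph S) (hτ : τ.IsTree) (x : S) :
    ∑ y ∈ Finset.univ.filter (fun y => τ.Adj x y), sc τ y x = Fintype.card S - 1 := by
  have hB : (Finset.univ.filter (fun y => τ.Adj x y)).biUnion
      (fun y => Finset.univ.filter (fun z => z ∈ sideSet τ y x)) = Finset.univ.erase x := by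
    ext z
    simp only [Finset.mem_biUnion, Finset.mem_filter, Finset.mem_univ, true_and,
      Finset.mem_erase, and_true]
    constructor
    · rintro ⟨y, hy, hz⟩
      intro hzx
      subst hzx
      exact not_mem_side τ hτ.IsAcyclic hy.symm hz
    · intro hz
      exact exists_first_step τ hτ hz
  have hdisj : ∀ y ∈ Finset.univ.filter (fun y => τ.Adj x y),
      ∀ y' ∈ Finset.univ.filter (fun y => τ.Adj x y), y ≠ y' →
      Disjoint (Finset.univ.filter (fun z => z ∈ sideSet τ y x))
        (Finset.univ.filter (fun z => z ∈ sideSet τ y' x)) := by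
    intro y hy y' hy' hne
    rw [Finset.disjoint_left]
    intro z hz1 hz2
    exact hne (side_unique τ hτ (Finset.mem_filter.mp hy).2 (Finset.mem_filter.mp hy').2
      (Finset.mem_filter.mp hz1).2 (Finset.mem_filter.mp hz2).2)
  calc ∑ y ∈ Finset.univ.filter (fun y => τ.Adj x y), sc τ y x
      = ((Finset.univ.filter (fun y => τ.Adj x y)).biUnion
          (fun y => Finset.univ.filter (fun z => z ∈ sideSet τ y x))).card :=
        (Finset.card_biUnion hdisj).symm
    _ = (Finset.univ.erase x).card := by rw [hB]
    _ = Fintype.card S - 1 := by rw [Finset.card_erase_of_mem (Finset.mem_univ x), Finset.card_univ]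

lemma even_zmod {n : ℕ} (h : Even n) : (n : ZMod 2) = 0 := by
  obtain ⟨k, rfl⟩ := h
  push_cast
  exact CharTwo.add_self_eq_zero _

lemma odd_zmod {n : ℕ} (h : Odd n) : (n : ZMod 2) = 1 := by
  obtain ⟨k, rfl⟩ := h
  push_cast
  rw [two_mul, CharTwo.add_self_eq_zero, zero_add]

/-- The key combinatorial lemma: in a tree on an even number of vertices, any
odd vertex subset `A` admits a tree edge leaving `A` whose side has odd size. -/
lemma key (τ : SimpleGraph S) (hτ : τ.IsTree) (A : Finset S)
    (heven : Even (Fintype.card S)) (hodd : Odd A.card) :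
    ∃ x y : S, τ.Adj x y ∧ x ∈ A ∧ y ∉ A ∧ Odd (sc τ x y) := by
  by_contra hcon
  push_neg at hcon
  have hAside : ∀ x y, τ.Adj x y → x ∈ A → y ∉ A → (sc τ x y : ZMod 2) = 0 := fun x y h hx hy =>
    even_zmod (Nat.not_odd_iff_even.mp (hcon x y h hx hy))
  have hsum : ∀ {x y : S}, τ.Adj x y → (sc τ x y : ZMod 2) + (sc τ y x : ZMod 2) = 0 := by
    intro x y h
    rw [← Nat.cast_add, sc_add τ hτ h]
    exact even_zmod heven
  set a : S → ZMod 2 := fun x => if x ∈ A then 1 else 0 with ha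
  set F : S × S → ZMod 2 := fun p => a p.1 * (sc τ p.1 p.2 : ZMod 2) with hF
  set P : Finset (S × S) := Finset.univ.filter (fun p => τ.Adj p.1 p.2) with hP
  have hmemP : ∀ {p : S × S}, p ∈ P ↔ τ.Adj p.1 p.2 := by
    intro p; rw [hP, Finset.mem_filter]; simp
  -- the sum of F over ordered adjacent pairs vanishes
  have sum0 : ∑ p ∈ P, F p = 0 := by
    refine Finset.sum_involution (fun p _ => (p.2, p.1)) ?_ ?_ ?_ ?_
    · rintro ⟨x, y⟩ hp
      have hadj : τ.Adj x y := hmemP.mp hp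
      have hs := hsum hadj
      simp only [hF, ha]
      by_cases hx : x ∈ A <;> by_cases hy : y ∈ A
      · rw [if_pos hx, if_pos hy, one_mul, one_mul]; exact hs
      · rw [if_pos hx, if_neg hy, one_mul, zero_mul, add_zero]
        exact hAside x y hadj hx hy
      · rw [if_neg hx, if_pos hy, zero_mul, one_mul, zero_add]
        exact hAside y x hadj.symm hy hx
      · rw [if_neg hx, if_neg hy, zero_mul, zero_mul, add_zero]
    · rintro ⟨x, y⟩ hp _
      have hadj : τ.Adj x y := hmemP.mp hp
      intro hc
      have : y = x := congrArg Prod.fst hc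
      exact hadj.ne this.symm
    · rintro ⟨x, y⟩ hp
      exact hmemP.mpr (hmemP.mp hp).symm
    · rintro ⟨x, y⟩ _
      rfl
  -- computing the same sum row by row gives the parity of `A`
  have hSne : Nonempty S := hτ.isConnected.nonempty
  have hcard1 : ((Fintype.card S - 1 : ℕ) : ZMod 2) = 1 :=
    odd_zmod (Nat.Even.sub_odd Fintype.card_pos heven odd_one)
  have inner : ∀ x : S, (∑ y : S, if τ.Adj x y then F (x, y) else 0) = a x := by
    intro x
    rw [← Finset.sum_filter]
    have e1 : ∀ y ∈ Finset.univ.filter (fun y => τ.Adj x y),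
        F (x, y) = a x * (sc τ y x : ZMod 2) := by
      intro y hy
      have hadj : τ.Adj x y := (Finset.mem_filter.mp hy).2
      have h2 : (sc τ x y : ZMod 2) = (sc τ y x : ZMod 2) := by
        have := eq_neg_of_add_eq_zero_left (hsum hadj)
        rwa [CharTwo.neg_eq] at this
      rw [hF]
      dsimp only
      rw [h2]
    rw [Finset.sum_congr rfl e1, ← Finset.mul_sum, ← Nat.cast_sum, sc_star τ hτ x, hcard1,
      mul_one]
  have sum1 : ∑ p ∈ P, F p = (A.card : ZMod 2) := by
    rw [hP, Finset.sum_filter, Fintype.sum_prod_type]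
    rw [Finset.sum_congr rfl (fun x _ => inner x)]
    rw [ha]
    rw [Finset.sum_boole]
    congr 1
    rw [Finset.filter_mem_eq_inter, Finset.univ_inter]
  rw [sum0, odd_zmod hodd] at sum1
  exact one_ne_zero sum1.symm

end PadbergRaoAux

/-- (Padberg–Rao / Rizzi.)  Given a Gomory–Hu cut-tree with terminal set `T`
(a tree `τ` on `T` with a map `π : V → T` fixing `T`, such that the cut induced by
each tree edge is a minimum cut separating its endpoints), some `T`-odd edge of the
cut-tree induces a minimum `T`-cut. -/
theorem stmt_4 {V : Type*} [Fintype V] [DecidableEq V]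
    (E : Finset (V × V)) (c : V × V → ℚ) (hc : ∀ e, 0 ≤ c e)
    (T : Finset V) (hTeven : Even T.card) (hTne : T.Nonempty)
    (τ : SimpleGraph {t : V // t ∈ T}) (hτ : τ.IsTree)
    (π : V → {t : V // t ∈ T}) (hπ : ∀ t : {t : V // t ∈ T}, π t.val = t)
    (hmin : ∀ x y : {t : V // t ∈ T}, τ.Adj x y →
      ∀ W : Finset V, (x : V) ∈ W → (y : V) ∉ W →
        (cutEdges E (Finset.univ.filter (fun v => π v ∈ sideSet τ x y))).sum c ≤
          (cutEdges E W).sum c) :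
    ∃ x y : {t : V // t ∈ T}, τ.Adj x y ∧
      Odd ((T ∩ Finset.univ.filter (fun v => π v ∈ sideSet τ x y)).card) ∧
      ∀ W : Finset V, Odd ((T ∩ W).card) →
        (cutEdges E (Finset.univ.filter (fun v => π v ∈ sideSet τ x y))).sum c ≤
          (cutEdges E W).sum c := by
  classical
  -- a generic cardinality transfer between `V`-side filters and subtype filters
  have card_eq : ∀ (p : V → Prop) (ip : DecidablePred p) (Q : {t : V // t ∈ T} → Prop)
      (iq : DecidablePred Q),
      (∀ (v : V) (h : v ∈ T), p v ↔ Q ⟨v, h⟩) →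
      (@Finset.filter V p ip T).card = (@Finset.filter _ Q iq Finset.univ).card := by
    intro p ip Q iq hpq
    refine Finset.card_bij (fun v hv => ⟨v, (Finset.mem_filter.mp hv).1⟩) ?_ ?_ ?_
    · intro v hv
      rw [Finset.mem_filter]
      exact ⟨Finset.mem_univ _, (hpq v (Finset.mem_filter.mp hv).1).mp
        (Finset.mem_filter.mp hv).2⟩
    · intro v hv v' hv' h
      exact congrArg Subtype.val h
    · intro t ht
      exact ⟨t.val, Finset.mem_filter.mpr ⟨t.2,
        (hpq t.val t.2).mpr (by simpa using (Finset.mem_filter.mp ht).2)⟩, rfl⟩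
  -- choose a minimum T-odd cut X
  have hWne : ((Finset.univ : Finset (Finset V)).filter
      (fun W => Odd ((T ∩ W).card))).Nonempty := by
    obtain ⟨t0, ht0⟩ := hTne
    refine ⟨{t0}, Finset.mem_filter.mpr ⟨Finset.mem_univ _, ?_⟩⟩
    have h1 : T ∩ {t0} = {t0} := by
      apply Finset.inter_eq_right.mpr
      simpa using ht0
    rw [h1, Finset.card_singleton]
    exact odd_one
  obtain ⟨X, hX, hXmin⟩ := Finset.exists_min_image _ (fun W => (cutEdges E W).sum c) hWne
  have hXodd : Odd ((T ∩ X).card) := (Finset.mem_filter.mp hX).2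
  -- translate to the subtype
  set A : Finset {t : V // t ∈ T} := Finset.univ.filter (fun t => t.val ∈ X) with hA
  have hAcard : (T ∩ X).card = A.card := by
    have h1 : T ∩ X = T.filter (fun v => v ∈ X) := by
      ext v
      simp only [Finset.mem_inter, Finset.mem_filter]
    rw [h1, hA]
    exact card_eq (fun v => v ∈ X) _ (fun t => t.val ∈ X) _ (fun v h => Iff.rfl)
  have heven : Even (Fintype.card {t : V // t ∈ T}) := by
    simpa [Fintype.card_coe] using hTeven
  obtain ⟨x, y, hadj, hxA, hyA, hoddside⟩ :=
    PadbergRaoAux.key τ hτ A heven (hAcard ▸ hXodd)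
  have hxX : (x : V) ∈ X := (Finset.mem_filter.mp hxA).2
  have hyX : (y : V) ∉ X := fun h => hyA (Finset.mem_filter.mpr ⟨Finset.mem_univ _, h⟩)
  have hsidecard : (T ∩ Finset.univ.filter (fun v => π v ∈ sideSet τ x y)).card
      = PadbergRaoAux.sc τ x y := by
    have h1 : T ∩ Finset.univ.filter (fun v => π v ∈ sideSet τ x y)
        = T.filter (fun v => π v ∈ sideSet τ x y) := by
      ext v
      simp only [Finset.mem_inter, Finset.mem_filter, Finset.mem_univ, true_and]
    rw [h1, PadbergRaoAux.sc]
    refine card_eq (fun v => π v ∈ sideSet τ x y) _ (fun t => t ∈ sideSet τ x y) _ ?_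
    intro v h
    have hv : π v = ⟨v, h⟩ := hπ ⟨v, h⟩
    simp only [hv]
  refine ⟨x, y, hadj, ?_, ?_⟩
  · rw [hsidecard]
    exact hoddside
  · intro W hW
    refine le_trans (hmin x y hadj X hxX hyX) ?_
    exact hXmin W (Finset.mem_filter.mpr ⟨Finset.mem_univ _, hW⟩)
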